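/- Let H = L²(Ω, ℝ) with ⟨ξ, ζ⟩ = E[ξζ]. Let X ∈ H^d and Z ∈ H^k. Among all X' ∈ H^d with Cov(X', Z) = 0, the vector X'_LEACE = X − Σ_{XZ} Σ_{ZZ}^+ (Z − E[Z]) minimizes E‖X' − X‖²_M simultaneously for every p.s.d. matrix M (‖v‖²_M = vᵀ M v). -/

import Mathlib

open Matrix MeasureTheory

lemma l2_mul_int {Ω : Type*} [MeasurableSpace Ω] {μ : Measure Ω} {f g : Ω → ℝ}
    (hf : MemLp f 2 μ) (hg : MemLp g 2 μ) :
    Integrable (fun ω => f ω * g ω) μ := by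
  have h : MemLp (f • g) 1 μ := hg.smul hf
  rw [memLp_one_iff_integrable] at h
  exact h

lemma scalar_opt {Ω : Type*} [MeasurableSpace Ω] {μ : Measure Ω} [IsProbabilityMeasure μ]
    {W Y : Ω → ℝ} (hW : MemLp W 2 μ) (hY : MemLp Y 2 μ)
    (hY0 : ∫ ω, Y ω ∂μ = 0)
    (hWY : ∫ ω, W ω * Y ω ∂μ = ∫ ω, Y ω * Y ω ∂μ) :
    ∫ ω, Y ω * Y ω ∂μ ≤ ∫ ω, W ω * W ω ∂μ := by
  set m := ∫ ω, W ω ∂μ with hm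
  have iW : Integrable W μ := hW.integrable one_le_two
  have iY : Integrable Y μ := hY.integrable one_le_two
  have iWW := l2_mul_int hW hW
  have iWY := l2_mul_int hW hY
  have iYY := l2_mul_int hY hY
  have h0 : 0 ≤ ∫ ω, (W ω - m - Y ω) * (W ω - m - Y ω) ∂μ :=
    integral_nonneg fun ω => mul_self_nonneg _
  have hexp : (fun ω => (W ω - m - Y ω) * (W ω - m - Y ω))
      = fun ω => (W ω * W ω - 2 * (W ω * Y ω) + Y ω * Y ω)
        + ((-(2 * m)) * W ω + ((2 * m) * Y ω + m * m)) := by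
    funext ω; ring
  have i1 : Integrable (fun ω => W ω * W ω - 2 * (W ω * Y ω)) μ := iWW.sub (iWY.const_mul 2)
  have i2 : Integrable (fun ω => W ω * W ω - 2 * (W ω * Y ω) + Y ω * Y ω) μ := i1.add iYY
  have i3 : Integrable (fun ω => (2 : ℝ) * m * Y ω + m * m) μ :=
    (iY.const_mul _).add (integrable_const _)
  have i4 : Integrable (fun ω => -(2 * m) * W ω + (2 * m * Y ω + m * m)) μ :=
    (iW.const_mul _).add i3
  rw [hexp] at h0
  rw [integral_add i2 i4, integral_add i1 iYY, integral_sub iWW (iWY.const_mul 2),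
    integral_add (iW.const_mul _) i3, integral_add (iY.const_mul _) (integrable_const _),
    integral_const_mul, integral_const_mul, integral_const_mul, integral_const] at h0
  simp only [measure_univ, probReal_univ, ENNReal.toReal_one, one_smul, hY0, hWY, mul_zero, ← hm] at h0
  nlinarith [mul_self_nonneg m]


/-- **Oracle LEACE optimality (Theorem I.1).**
Let `X ∈ (L²)^d` and `Z ∈ (L²)^k` be random vectors.  Among all `X' ∈ (L²)^d`
with `Cov(X', Z) = 0`, the vector
`X'_LEACE = X - Σ_{XZ} Σ_{ZZ}⁺ (Z - E[Z])` minimizes `E‖X' - X‖²_M`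
simultaneously for every p.s.d. matrix `M` (where `‖v‖²_M = vᵀ M v` and
`Σ_{ZZ}⁺` is the Moore–Penrose pseudoinverse of `Σ_{ZZ}`). -/
theorem oracle_leace_optimal {d k : ℕ}
    {Ω : Type*} [MeasurableSpace Ω] (μ : Measure Ω) [IsProbabilityMeasure μ]
    (X : Ω → Fin d → ℝ) (Z : Ω → Fin k → ℝ)
    (hX : ∀ i, MemLp (fun ω => X ω i) 2 μ)
    (hZ : ∀ j, MemLp (fun ω => Z ω j) 2 μ)
    (mZ : Fin k → ℝ) (hmZ : ∀ j, mZ j = ∫ ω, Z ω j ∂μ)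
    (Sxz : Matrix (Fin d) (Fin k) ℝ)
    (hSxz : ∀ i j, Sxz i j =
      (∫ ω, X ω i * Z ω j ∂μ) - (∫ ω, X ω i ∂μ) * (∫ ω, Z ω j ∂μ))
    (Szz : Matrix (Fin k) (Fin k) ℝ)
    (hSzz : ∀ j l, Szz j l =
      (∫ ω, Z ω j * Z ω l ∂μ) - (∫ ω, Z ω j ∂μ) * (∫ ω, Z ω l ∂μ))
    (T : Matrix (Fin k) (Fin k) ℝ)
    (hT1 : Szz * T * Szz = Szz) (hT2 : T * Szz * T = T)
    (hT3 : (Szz * T)ᵀ = Szz * T) (hT4 : (T * Szz)ᵀ = T * Szz)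
    (XL : Ω → Fin d → ℝ)
    (hXL : ∀ ω, XL ω = X ω - (Sxz * T) *ᵥ (Z ω - mZ))
    (M : Matrix (Fin d) (Fin d) ℝ) (hM : M.PosSemidef) :
    ∀ X' : Ω → Fin d → ℝ,
      (∀ i, MemLp (fun ω => X' ω i) 2 μ) →
      (∀ i j, (∫ ω, X' ω i * Z ω j ∂μ) - (∫ ω, X' ω i ∂μ) * (∫ ω, Z ω j ∂μ) = 0) →
      ∫ ω, (XL ω - X ω) ⬝ᵥ M *ᵥ (XL ω - X ω) ∂μ
        ≤ ∫ ω, (X' ω - X ω) ⬝ᵥ M *ᵥ (X' ω - X ω) ∂μ := by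
  intro X' hX' hCov
  -- ## Matrix algebra
  have hSsym : Szzᵀ = Szz := by
    ext j l
    rw [Matrix.transpose_apply, hSzz, hSzz,
      show (∫ ω, Z ω l * Z ω j ∂μ) = ∫ ω, Z ω j * Z ω l ∂μ from
        integral_congr_ae (Filter.Eventually.of_forall fun ω => mul_comm _ _)]
    ring
  have hC2 : Tᵀ * Szz * Tᵀ = Tᵀ := by
    have h := congrArg Matrix.transpose hT2
    rw [Matrix.transpose_mul, Matrix.transpose_mul, hSsym, ← Matrix.mul_assoc] at h
    exact h
  have hAC : Szz * Tᵀ = T * Szz := by rw [← hT4, Matrix.transpose_mul, hSsym]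
  have hCA : Tᵀ * Szz = Szz * T := by rw [← hT3, Matrix.transpose_mul, hSsym]
  have h5 : Szz * T = Szz * Tᵀ :=
    calc Szz * T = Tᵀ * Szz := hCA.symm
      _ = Tᵀ * (Szz * T * Szz) := by rw [hT1]
      _ = (Tᵀ * Szz) * (T * Szz) := by simp only [Matrix.mul_assoc]
      _ = (Szz * T) * (Szz * Tᵀ) := by rw [hCA, ← hAC]
      _ = (Szz * T * Szz) * Tᵀ := by simp only [Matrix.mul_assoc]
      _ = Szz * Tᵀ := by rw [hT1]
  have h6 : Tᵀ * Szz = T * Szz := by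
    have h := congrArg Matrix.transpose h5
    rw [Matrix.transpose_mul, Matrix.transpose_mul, hSsym, Matrix.transpose_transpose] at h
    exact h
  have hKey : T * Szz * Tᵀ = Tᵀ := by rw [← h6]; exact hC2
  have hMain : (Sxz * T) * (Szz * (Sxz * T)ᵀ) = Sxz * (Sxz * T)ᵀ := by
    rw [Matrix.transpose_mul]
    calc Sxz * T * (Szz * (Tᵀ * Sxzᵀ)) = Sxz * (T * Szz * Tᵀ) * Sxzᵀ := by
          simp only [Matrix.mul_assoc]
      _ = Sxz * Tᵀ * Sxzᵀ := by rw [hKey]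
      _ = Sxz * (Tᵀ * Sxzᵀ) := by simp only [Matrix.mul_assoc]
  -- ## Integral basics
  have iZ : ∀ j, Integrable (fun ω => Z ω j) μ := fun j => (hZ j).integrable one_le_two
  have iX : ∀ i, Integrable (fun ω => X ω i) μ := fun i => (hX i).integrable one_le_two
  have iX' : ∀ i, Integrable (fun ω => X' ω i) μ := fun i => (hX' i).integrable one_le_two
  have hZt2 : ∀ j, MemLp (fun ω => Z ω j - mZ j) 2 μ := fun j => (hZ j).sub (memLp_const _)
  have iZt : ∀ j, Integrable (fun ω => Z ω j - mZ j) μ :=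
    fun j => (iZ j).sub (integrable_const _)
  have hD2 : ∀ i, MemLp (fun ω => X' ω i - X ω i) 2 μ := fun i => (hX' i).sub (hX i)
  have hZt0 : ∀ j, ∫ ω, (Z ω j - mZ j) ∂μ = 0 := by
    intro j
    rw [integral_sub (iZ j) (integrable_const _), integral_const]
    simp [hmZ j, measure_univ]
  have hZZ : ∀ j l, ∫ ω, (Z ω j - mZ j) * (Z ω l - mZ l) ∂μ = Szz j l := by
    intro j l
    have hrw : (fun ω => (Z ω j - mZ j) * (Z ω l - mZ l))
        = fun ω => Z ω j * Z ω l - mZ l * Z ω j - mZ j * Z ω l + mZ j * mZ l := by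
      funext ω; ring
    have i1 : Integrable (fun ω => Z ω j * Z ω l) μ := l2_mul_int (hZ j) (hZ l)
    have i2 : Integrable (fun ω => Z ω j * Z ω l - mZ l * Z ω j) μ :=
      i1.sub ((iZ j).const_mul _)
    have i3 : Integrable (fun ω => Z ω j * Z ω l - mZ l * Z ω j - mZ j * Z ω l) μ :=
      i2.sub ((iZ l).const_mul _)
    rw [hrw, integral_add i3 (integrable_const _), integral_sub i2 ((iZ l).const_mul _),
      integral_sub i1 ((iZ j).const_mul _), integral_const_mul, integral_const_mul,
      integral_const, hSzz, hmZ j, hmZ l]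
    simp [measure_univ]
    ring
  have hXZ : ∀ i j, ∫ ω, (X' ω i - X ω i) * (Z ω j - mZ j) ∂μ = -(Sxz i j) := by
    intro i j
    have hrw : (fun ω => (X' ω i - X ω i) * (Z ω j - mZ j))
        = fun ω => X' ω i * Z ω j - mZ j * X' ω i - X ω i * Z ω j + mZ j * X ω i := by
      funext ω; ring
    have i1 : Integrable (fun ω => X' ω i * Z ω j) μ := l2_mul_int (hX' i) (hZ j)
    have i1' : Integrable (fun ω => X ω i * Z ω j) μ := l2_mul_int (hX i) (hZ j)
    have i2 : Integrable (fun ω => X' ω i * Z ω j - mZ j * X' ω i) μ :=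
      i1.sub ((iX' i).const_mul _)
    have i3 : Integrable (fun ω => X' ω i * Z ω j - mZ j * X' ω i - X ω i * Z ω j) μ :=
      i2.sub i1'
    rw [hrw, integral_add i3 ((iX i).const_mul _), integral_sub i2 i1',
      integral_sub i1 ((iX' i).const_mul _), integral_const_mul, integral_const_mul,
      hSxz, hmZ j]
    linear_combination hCov i j
  -- ## Key inequality in any direction `a`
  have key : ∀ a : Fin d → ℝ,
      MemLp (fun ω => a ⬝ᵥ (XL ω - X ω)) 2 μ ∧
      MemLp (fun ω => a ⬝ᵥ (X' ω - X ω)) 2 μ ∧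
      ∫ ω, (a ⬝ᵥ (XL ω - X ω)) * (a ⬝ᵥ (XL ω - X ω)) ∂μ
        ≤ ∫ ω, (a ⬝ᵥ (X' ω - X ω)) * (a ⬝ᵥ (X' ω - X ω)) ∂μ := by
    intro a
    set u : Fin k → ℝ := a ᵥ* (Sxz * T) with hu
    have hu2 : (Sxz * T)ᵀ *ᵥ a = u := Matrix.mulVec_transpose _ _
    have hYfun : (fun ω => a ⬝ᵥ (XL ω - X ω))
        = fun ω => ∑ j, (-(u j)) * (Z ω j - mZ j) := by
      funext ω
      rw [hXL ω, sub_sub_cancel_left, dotProduct_neg, dotProduct_mulVec, ← hu]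
      simp [dotProduct, neg_mul, Finset.sum_neg_distrib]
    have hWfun : (fun ω => a ⬝ᵥ (X' ω - X ω))
        = fun ω => ∑ i, a i * (X' ω i - X ω i) := by
      funext ω; simp [dotProduct]
    have hYmem : MemLp (fun ω => ∑ j, (-(u j)) * (Z ω j - mZ j)) 2 μ :=
      memLp_finset_sum _ fun j _ => (hZt2 j).const_mul _
    have hWmem : MemLp (fun ω => ∑ i, a i * (X' ω i - X ω i)) 2 μ :=
      memLp_finset_sum _ fun i _ => (hD2 i).const_mul _
    have hY0 : ∫ ω, (∑ j, (-(u j)) * (Z ω j - mZ j)) ∂μ = 0 := by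
      rw [integral_finset_sum _ fun j _ => ((iZt j).const_mul _)]
      simp [neg_mul, integral_neg, integral_const_mul, hZt0]
    have hWY : ∫ ω, (∑ i, a i * (X' ω i - X ω i)) * (∑ j, (-(u j)) * (Z ω j - mZ j)) ∂μ
        = ∑ i, ∑ j, a i * u j * Sxz i j := by
      have hrw : (fun ω => (∑ i, a i * (X' ω i - X ω i)) * (∑ j, (-(u j)) * (Z ω j - mZ j)))
          = fun ω => ∑ i, ∑ j, (a i * u j) * (-((X' ω i - X ω i) * (Z ω j - mZ j))) := by
        funext ω
        rw [Finset.sum_mul_sum]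
        exact Finset.sum_congr rfl fun i _ => Finset.sum_congr rfl fun j _ => by ring
      have ii : ∀ (i : Fin d) (j : Fin k),
          Integrable (fun ω => a i * u j * -((X' ω i - X ω i) * (Z ω j - mZ j))) μ :=
        fun i j => ((l2_mul_int (hD2 i) (hZt2 j)).neg.const_mul _)
      rw [hrw, integral_finset_sum _ fun i _ => integrable_finset_sum _ fun j _ => ii i j]
      refine Finset.sum_congr rfl fun i _ => ?_
      rw [integral_finset_sum _ fun j _ => ii i j]
      refine Finset.sum_congr rfl fun j _ => ?_
      rw [integral_const_mul, integral_neg, hXZ i j, neg_neg]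
    have hYY : ∫ ω, (∑ j, (-(u j)) * (Z ω j - mZ j)) * (∑ l, (-(u l)) * (Z ω l - mZ l)) ∂μ
        = ∑ j, ∑ l, u j * u l * Szz j l := by
      have hrw : (fun ω => (∑ j, (-(u j)) * (Z ω j - mZ j)) * (∑ l, (-(u l)) * (Z ω l - mZ l)))
          = fun ω => ∑ j, ∑ l, (u j * u l) * ((Z ω j - mZ j) * (Z ω l - mZ l)) := by
        funext ω
        rw [Finset.sum_mul_sum]
        exact Finset.sum_congr rfl fun j _ => Finset.sum_congr rfl fun l _ => by ring
      have ii : ∀ (j l : Fin k),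
          Integrable (fun ω => u j * u l * ((Z ω j - mZ j) * (Z ω l - mZ l))) μ :=
        fun j l => ((l2_mul_int (hZt2 j) (hZt2 l)).const_mul _)
      rw [hrw, integral_finset_sum _ fun j _ => integrable_finset_sum _ fun l _ => ii j l]
      refine Finset.sum_congr rfl fun j _ => ?_
      rw [integral_finset_sum _ fun l _ => ii j l]
      refine Finset.sum_congr rfl fun l _ => ?_
      rw [integral_const_mul, hZZ j l]
    have hsum : ∑ j, ∑ l, u j * u l * Szz j l = ∑ i, ∑ j, a i * u j * Sxz i j := by
      have e1 : ∑ j, ∑ l, u j * u l * Szz j l = u ⬝ᵥ (Szz *ᵥ u) := by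
        simp only [dotProduct, Matrix.mulVec, Finset.mul_sum]
        exact Finset.sum_congr rfl fun j _ => Finset.sum_congr rfl fun l _ => by ring
      have e2 : ∑ i, ∑ j, a i * u j * Sxz i j = a ⬝ᵥ (Sxz *ᵥ u) := by
        simp only [dotProduct, Matrix.mulVec, Finset.mul_sum]
        exact Finset.sum_congr rfl fun i _ => Finset.sum_congr rfl fun j _ => by ring
      rw [e1, e2]
      calc u ⬝ᵥ (Szz *ᵥ u) = a ⬝ᵥ ((Sxz * T) *ᵥ (Szz *ᵥ ((Sxz * T)ᵀ *ᵥ a))) := by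
            rw [hu2, dotProduct_mulVec a (Sxz * T) (Szz *ᵥ u), ← hu]
        _ = a ⬝ᵥ (((Sxz * T) * (Szz * (Sxz * T)ᵀ)) *ᵥ a) := by
            rw [Matrix.mulVec_mulVec, Matrix.mulVec_mulVec, Matrix.mul_assoc]
        _ = a ⬝ᵥ ((Sxz * (Sxz * T)ᵀ) *ᵥ a) := by rw [hMain]
        _ = a ⬝ᵥ (Sxz *ᵥ u) := by rw [← Matrix.mulVec_mulVec, hu2]
    refine ⟨by rw [hYfun]; exact hYmem, by rw [hWfun]; exact hWmem, ?_⟩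
    have hYint : ∫ ω, (a ⬝ᵥ (XL ω - X ω)) * (a ⬝ᵥ (XL ω - X ω)) ∂μ
        = ∫ ω, (∑ j, (-(u j)) * (Z ω j - mZ j)) * (∑ j, (-(u j)) * (Z ω j - mZ j)) ∂μ := by
      refine integral_congr_ae (Filter.Eventually.of_forall fun ω => ?_)
      beta_reduce
      rw [show a ⬝ᵥ (XL ω - X ω) = ∑ j, (-(u j)) * (Z ω j - mZ j) from congrFun hYfun ω]
    have hWint : ∫ ω, (a ⬝ᵥ (X' ω - X ω)) * (a ⬝ᵥ (X' ω - X ω)) ∂μ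
        = ∫ ω, (∑ i, a i * (X' ω i - X ω i)) * (∑ i, a i * (X' ω i - X ω i)) ∂μ := by
      refine integral_congr_ae (Filter.Eventually.of_forall fun ω => ?_)
      beta_reduce
      rw [show a ⬝ᵥ (X' ω - X ω) = ∑ i, a i * (X' ω i - X ω i) from congrFun hWfun ω]
    rw [hYint, hWint]
    exact scalar_opt hWmem hYmem hY0 (by rw [hWY, hYY, hsum])
  -- ## Assembling with `M = Bᵀ * B`
  obtain ⟨B, hB⟩ : ∃ B : Matrix (Fin d) (Fin d) ℝ, M = Bᴴ * B := by
    open scoped MatrixOrder in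
    exact CStarAlgebra.nonneg_iff_eq_star_mul_self.mp hM.nonneg
  rw [Matrix.conjTranspose_eq_transpose_of_trivial] at hB
  have hpt : ∀ v : Fin d → ℝ, v ⬝ᵥ M *ᵥ v = ∑ i, (B i ⬝ᵥ v) * (B i ⬝ᵥ v) := by
    intro v
    rw [hB, ← Matrix.mulVec_mulVec, dotProduct_mulVec, Matrix.vecMul_transpose]
    simp [dotProduct, Matrix.mulVec]
  calc ∫ ω, (XL ω - X ω) ⬝ᵥ M *ᵥ (XL ω - X ω) ∂μ
      = ∑ i, ∫ ω, (B i ⬝ᵥ (XL ω - X ω)) * (B i ⬝ᵥ (XL ω - X ω)) ∂μ := by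
        simp_rw [hpt]
        exact integral_finset_sum _ fun i _ => l2_mul_int (key (B i)).1 (key (B i)).1
    _ ≤ ∑ i, ∫ ω, (B i ⬝ᵥ (X' ω - X ω)) * (B i ⬝ᵥ (X' ω - X ω)) ∂μ :=
        Finset.sum_le_sum fun i _ => (key (B i)).2.2
    _ = ∫ ω, (X' ω - X ω) ⬝ᵥ M *ᵥ (X' ω - X ω) ∂μ := by
        simp_rw [hpt]
        exact (integral_finset_sum _ fun i _ => l2_mul_int (key (B i)).2.1 (key (B i)).2.1).symm
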